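/- Let f, g : ℝ → ℝ be continuous and Lebesgue integrable, and define (∂⁻¹f)(x) = (1/2)∫_{−∞}^{x} f − (1/2)∫_{x}^{∞} f, and similarly for g. Assume f·∂⁻¹g and g·∂⁻¹f are integrable. Then ∫_ℝ (∂⁻¹f)(x) g(x) dx = − ∫_ℝ f(x) (∂⁻¹g)(x) dx, i.e., ∂⁻¹ is a skew-symmetric operator with respect to the L² pairing. -/

import Mathlib

open MeasureTheory Real Set Filter

noncomputable def symmAntideriv (f : ℝ → ℝ) (x : ℝ) : ℝ :=
  (1 / 2) * (∫ s in Set.Iic x, f s) - (1 / 2) * ∫ s in Set.Ici x, f s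

lemma symmAntideriv_eq (f : ℝ → ℝ) (hfi : Integrable f) (x : ℝ) :
    symmAntideriv f x = (∫ s in Set.Iic x, f s) - (1 / 2) * ∫ s, f s := by
  have h1 : (∫ s in Set.Ici x, f s) = ∫ s in Set.Ioi x, f s :=
    integral_Ici_eq_integral_Ioi
  have h2 : (∫ s in Set.Iic x, f s) + ∫ s in Set.Ioi x, f s = ∫ s, f s := by
    rw [← setIntegral_union (Iic_disjoint_Ioi le_rfl) measurableSet_Ioi
      hfi.integrableOn hfi.integrableOn, Set.Iic_union_Ioi, setIntegral_univ]
  unfold symmAntideriv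
  rw [h1]
  linarith

lemma symmAntideriv_hasDerivAt (f : ℝ → ℝ) (hf : Continuous f) (hfi : Integrable f) (x : ℝ) :
    HasDerivAt (symmAntideriv f) (f x) x := by
  have key : ∀ y, symmAntideriv f y =
      (∫ s in (0:ℝ)..y, f s) + ((∫ s in Set.Iic (0:ℝ), f s) - (1 / 2) * ∫ s, f s) := by
    intro y
    rw [symmAntideriv_eq f hfi]
    have := intervalIntegral.integral_Iic_sub_Iic (hfi.integrableOn (s := Set.Iic 0))
      (hfi.integrableOn (s := Set.Iic y)) (a := 0) (b := y)
    linarith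
  have h := (intervalIntegral.integral_hasDerivAt_right (a := 0) (b := x)
    hfi.intervalIntegrable (hf.stronglyMeasurableAtFilter _ _) hf.continuousAt)
  have : HasDerivAt (fun y => (∫ s in (0:ℝ)..y, f s) +
      ((∫ s in Set.Iic (0:ℝ), f s) - (1 / 2) * ∫ s, f s)) (f x) x := by
    simpa using h.add_const ((∫ s in Set.Iic (0:ℝ), f s) - (1 / 2) * ∫ s, f s)
  exact this.congr_of_eventuallyEq (Filter.Eventually.of_forall fun y => (key y))

lemma symmAntideriv_tendsto_atTop (f : ℝ → ℝ) (hfi : Integrable f) :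
    Tendsto (symmAntideriv f) atTop (nhds ((1 / 2) * ∫ s, f s)) := by
  have h : Tendsto (fun x => ∫ s in (0:ℝ)..x, f s) atTop
      (nhds (∫ s in Set.Ioi (0:ℝ), f s)) :=
    intervalIntegral_tendsto_integral_Ioi 0 hfi.integrableOn tendsto_id
  have h2 := h.add_const ((∫ s in Set.Iic (0:ℝ), f s) - (1 / 2) * ∫ s, f s)
  have heq : (∫ s in Set.Ioi (0:ℝ), f s) + ((∫ s in Set.Iic (0:ℝ), f s)
      - (1 / 2) * ∫ s, f s) = (1 / 2) * ∫ s, f s := by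
    have : (∫ s in Set.Iic (0:ℝ), f s) + ∫ s in Set.Ioi (0:ℝ), f s = ∫ s, f s := by
      rw [← setIntegral_union (Iic_disjoint_Ioi le_rfl) measurableSet_Ioi
        hfi.integrableOn hfi.integrableOn, Set.Iic_union_Ioi, setIntegral_univ]
    linarith
  rw [heq] at h2
  refine h2.congr fun x => ?_
  rw [symmAntideriv_eq f hfi]
  have := intervalIntegral.integral_Iic_sub_Iic (hfi.integrableOn (s := Set.Iic 0))
    (hfi.integrableOn (s := Set.Iic x)) (a := 0) (b := x)
  linarith

lemma symmAntideriv_tendsto_atBot (f : ℝ → ℝ) (hfi : Integrable f) :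
    Tendsto (symmAntideriv f) atBot (nhds (-((1 / 2) * ∫ s, f s))) := by
  have h : Tendsto (fun x => ∫ s in x..(0:ℝ), f s) atBot
      (nhds (∫ s in Set.Iic (0:ℝ), f s)) :=
    intervalIntegral_tendsto_integral_Iic 0 hfi.integrableOn tendsto_id
  have h2 := (h.neg).add_const ((∫ s in Set.Iic (0:ℝ), f s) - (1 / 2) * ∫ s, f s)
  have heq : -(∫ s in Set.Iic (0:ℝ), f s) + ((∫ s in Set.Iic (0:ℝ), f s)
      - (1 / 2) * ∫ s, f s) = -((1 / 2) * ∫ s, f s) := by ring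
  rw [heq] at h2
  refine h2.congr fun x => ?_
  rw [symmAntideriv_eq f hfi]
  have := intervalIntegral.integral_Iic_sub_Iic (hfi.integrableOn (s := Set.Iic x))
    (hfi.integrableOn (s := Set.Iic 0)) (a := x) (b := 0)
  linarith

theorem symmAntideriv_skew (f g : ℝ → ℝ) (hf : Continuous f) (hg : Continuous g)
    (hfi : Integrable f) (hgi : Integrable g)
    (h1 : Integrable (fun x => f x * symmAntideriv g x))
    (h2 : Integrable (fun x => g x * symmAntideriv f x)) :
    ∫ x : ℝ, symmAntideriv f x * g x = -∫ x : ℝ, f x * symmAntideriv g x := by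
  set F := symmAntideriv f
  set G := symmAntideriv g
  have hF := symmAntideriv_hasDerivAt f hf hfi
  have hG := symmAntideriv_hasDerivAt g hg hgi
  have hderiv : ∀ x, HasDerivAt (fun y => F y * G y) (f x * G x + F x * g x) x :=
    fun x => (hF x).mul (hG x)
  have h2' : Integrable (fun x => F x * g x) := by
    simpa [mul_comm] using h2
  have hint : Integrable (fun x => f x * G x + F x * g x) := h1.add h2'
  have hbot : Tendsto (fun y => F y * G y) atBot
      (nhds ((1 / 2 * ∫ s, f s) * (1 / 2 * ∫ s, g s))) := by
    have := (symmAntideriv_tendsto_atBot f hfi).mul (symmAntideriv_tendsto_atBot g hgi)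
    simpa [neg_mul_neg] using this
  have htop : Tendsto (fun y => F y * G y) atTop
      (nhds ((1 / 2 * ∫ s, f s) * (1 / 2 * ∫ s, g s))) :=
    (symmAntideriv_tendsto_atTop f hfi).mul (symmAntideriv_tendsto_atTop g hgi)
  have hzero : (∫ x, (f x * G x + F x * g x)) = 0 := by
    rw [MeasureTheory.integral_of_hasDerivAt_of_tendsto hderiv hint hbot htop]
    ring
  rw [integral_add h1 h2'] at hzero
  linarith
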